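/- Let M be a real symmetric invertible n×n matrix, let d, y ∈ ℝ^n with y ≠ 0, and let β ∈ [0, 1/3] satisfy ‖Md − M⁻¹y‖ ≤ β‖M⁻¹y‖. Set P = I − (M⁻¹y)(Md)ᵀ/(dᵀy) and α = (1 − 2β)/(1 − β²). Then: (a) (1 − β)‖M⁻¹y‖² ≤ dᵀy ≤ (1 + β)‖M⁻¹y‖²; for every nonzero real n×n matrix E, with θ = ‖E M⁻¹ y‖/(‖E‖_F ‖M⁻¹y‖): (b) ‖E(I − (M⁻¹y)(M⁻¹y)ᵀ/(dᵀy))‖_F ≤ √(1 − αθ²)·‖E‖_F; (c) ‖EP‖_F ≤ (√(1 − αθ²) + (1 − β)⁻¹·‖Md − M⁻¹y‖/‖M⁻¹y‖)·‖E‖_F; and (d) for every s ∈ ℝ^n and every real n×n matrix A, ‖(s − Ay)(Md)ᵀ/(dᵀy)‖_F ≤ 2‖s − Ay‖/‖M⁻¹y‖. -/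

import Mathlib

open Matrix

/-- The Frobenius norm of a real matrix. -/
noncomputable def frobNorm {p q : ℕ} (A : Matrix (Fin p) (Fin q) ℝ) : ℝ :=
  Real.sqrt (∑ i, ∑ j, A i j ^ 2)

/-- The Euclidean norm of a vector in `ℝ^n`. -/
noncomputable def euclNorm {p : ℕ} (u : Fin p → ℝ) : ℝ :=
  Real.sqrt (∑ i, u i ^ 2)

section helpers
variable {p q : ℕ}

lemma euclNorm_nonneg (u : Fin p → ℝ) : 0 ≤ euclNorm u := Real.sqrt_nonneg _

lemma sq_euclNorm (u : Fin p → ℝ) : euclNorm u ^ 2 = ∑ i, u i ^ 2 :=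
  Real.sq_sqrt (Finset.sum_nonneg fun i _ => sq_nonneg _)

lemma frobNorm_nonneg (A : Matrix (Fin p) (Fin q) ℝ) : 0 ≤ frobNorm A := Real.sqrt_nonneg _

lemma sq_frobNorm (A : Matrix (Fin p) (Fin q) ℝ) : frobNorm A ^ 2 = ∑ i, ∑ j, A i j ^ 2 :=
  Real.sq_sqrt (Finset.sum_nonneg fun i _ => Finset.sum_nonneg fun j _ => sq_nonneg _)

/-- view a vector as element of Euclidean space -/
noncomputable def toEv (u : Fin p → ℝ) : EuclideanSpace ℝ (Fin p) := WithLp.toLp 2 u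

lemma euclNorm_eq_norm (u : Fin p → ℝ) : euclNorm u = ‖toEv u‖ := by
  rw [EuclideanSpace.norm_eq]
  unfold euclNorm toEv
  congr 1
  refine Finset.sum_congr rfl fun i _ => ?_
  rw [Real.norm_eq_abs, sq_abs]

lemma euclNorm_triangle (u v : Fin p → ℝ) : euclNorm (u + v) ≤ euclNorm u + euclNorm v := by
  rw [euclNorm_eq_norm, euclNorm_eq_norm, euclNorm_eq_norm]
  exact norm_add_le (toEv u) (toEv v)

noncomputable def toEm (A : Matrix (Fin p) (Fin q) ℝ) : EuclideanSpace ℝ (Fin p × Fin q) :=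
  WithLp.toLp 2 (fun ij : Fin p × Fin q => A ij.1 ij.2)

lemma frobNorm_eq_norm (A : Matrix (Fin p) (Fin q) ℝ) : frobNorm A = ‖toEm A‖ := by
  rw [EuclideanSpace.norm_eq]
  unfold frobNorm toEm
  congr 1
  rw [Fintype.sum_prod_type]
  refine Finset.sum_congr rfl fun i _ => Finset.sum_congr rfl fun j _ => ?_
  rw [Real.norm_eq_abs, sq_abs]

lemma frobNorm_triangle (A B : Matrix (Fin p) (Fin q) ℝ) :
    frobNorm (A + B) ≤ frobNorm A + frobNorm B := by
  rw [frobNorm_eq_norm, frobNorm_eq_norm, frobNorm_eq_norm]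
  exact norm_add_le (toEm A) (toEm B)

lemma frobNorm_smul (c : ℝ) (A : Matrix (Fin p) (Fin q) ℝ) :
    frobNorm (c • A) = |c| * frobNorm A := by
  rw [frobNorm_eq_norm, frobNorm_eq_norm]
  have : toEm (c • A) = c • toEm A := rfl
  rw [this, norm_smul, Real.norm_eq_abs]

lemma frobNorm_vecMulVec (u : Fin p → ℝ) (v : Fin q → ℝ) :
    frobNorm (vecMulVec u v) = euclNorm u * euclNorm v := by
  unfold frobNorm euclNorm
  rw [← Real.sqrt_mul (Finset.sum_nonneg fun i _ => sq_nonneg _)]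
  congr 1
  rw [Finset.sum_mul_sum]
  refine Finset.sum_congr rfl fun i _ => Finset.sum_congr rfl fun j _ => ?_
  simp [vecMulVec_apply]
  ring

lemma abs_dot_le (u v : Fin p → ℝ) : |u ⬝ᵥ v| ≤ euclNorm u * euclNorm v := by
  have h : (u ⬝ᵥ v)^2 ≤ (∑ i, u i ^2) * (∑ i, v i ^2) := by
    simpa [dotProduct] using Finset.sum_mul_sq_le_sq_mul_sq Finset.univ u v
  have := Real.sqrt_le_sqrt h
  rwa [Real.sqrt_sq_eq_abs, Real.sqrt_mul (Finset.sum_nonneg fun i _ => sq_nonneg _)] at this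

lemma sq_mulVec_le (A : Matrix (Fin p) (Fin q) ℝ) (u : Fin q → ℝ) :
    euclNorm (A *ᵥ u) ^ 2 ≤ frobNorm A ^ 2 * euclNorm u ^ 2 := by
  rw [sq_euclNorm, sq_frobNorm, sq_euclNorm, Finset.sum_mul]
  refine Finset.sum_le_sum fun i _ => ?_
  have : (A *ᵥ u) i = ∑ j, A i j * u j := rfl
  rw [this]
  exact Finset.sum_mul_sq_le_sq_mul_sq Finset.univ (A i) u

lemma euclNorm_mulVec_le (A : Matrix (Fin p) (Fin q) ℝ) (u : Fin q → ℝ) :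
    euclNorm (A *ᵥ u) ≤ frobNorm A * euclNorm u := by
  have h := sq_mulVec_le A u
  have h2 := Real.sqrt_le_sqrt h
  rwa [Real.sqrt_sq (euclNorm_nonneg _), ← mul_pow,
    Real.sqrt_sq (mul_nonneg (frobNorm_nonneg _) (euclNorm_nonneg _))] at h2

lemma mul_vecMulVec (E : Matrix (Fin p) (Fin p) ℝ) (u v : Fin p → ℝ) :
    E * vecMulVec u v = vecMulVec (E *ᵥ u) v := by
  ext i j
  simp only [Matrix.mul_apply, vecMulVec_apply, mulVec, dotProduct, Finset.sum_mul]
  refine Finset.sum_congr rfl fun k _ => by ring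

lemma key_quad (β c N : ℝ) (h0 : 0 ≤ β) (h3 : β ≤ 1/3) (hN : 0 < N)
    (h1 : (1-β)*N ≤ c) (h2 : c ≤ (1+β)*N) :
    (1-2*β)*c^2 ≤ (2*c - N)*N*(1-β^2) := by
  have h1' : (0:ℝ) ≤ c - (1-β)*N := by linarith
  have h2' : (0:ℝ) ≤ (1+β)*N - c := by linarith
  have hg : (0:ℝ) ≤ 1 - 2*β := by linarith
  have hx : (0:ℝ) ≤ c*(2-β) - (1-β^2)*N := by
    nlinarith [mul_le_mul_of_nonneg_left h1 (show (0:ℝ) ≤ 2-β by linarith),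
      mul_nonneg (mul_nonneg hN.le (show (0:ℝ) ≤ 1-β by linarith)) hg]
  have hint1 : (0:ℝ) ≤ (1-2*β)*((c-(1-β)*N)*((1+β)*N-c)) :=
    mul_nonneg hg (mul_nonneg h1' h2')
  have hint2 : (0:ℝ) ≤ β*(N*(c*(2-β) - (1-β^2)*N)) :=
    mul_nonneg h0 (mul_nonneg hN.le hx)
  nlinarith [hint1, hint2]

end helpers

set_option maxHeartbeats 1000000 in
/-- Quantitative bounds for the BFGS projection matrix
`P = I − (M⁻¹y)(Md)ᵀ/(dᵀy)` under the closeness assumption `‖Md − M⁻¹y‖ ≤ β‖M⁻¹y‖`,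
`β ∈ [0, 1/3]`: parts (a)–(d). -/
theorem bfgs_projection_bounds {n : ℕ}
    (M : Matrix (Fin n) (Fin n) ℝ) (hM_symm : Mᵀ = M) (hM_inv : IsUnit M.det)
    (dvec y : Fin n → ℝ) (hy : y ≠ 0)
    (β : ℝ) (hβ0 : 0 ≤ β) (hβ3 : β ≤ 1 / 3)
    (hclose : euclNorm (M *ᵥ dvec - M⁻¹ *ᵥ y) ≤ β * euclNorm (M⁻¹ *ᵥ y))
    (P : Matrix (Fin n) (Fin n) ℝ)
    (hP : P = 1 - (dvec ⬝ᵥ y)⁻¹ • vecMulVec (M⁻¹ *ᵥ y) (M *ᵥ dvec))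
    (α : ℝ) (hα : α = (1 - 2 * β) / (1 - β ^ 2)) :
    -- (a)
    ((1 - β) * euclNorm (M⁻¹ *ᵥ y) ^ 2 ≤ dvec ⬝ᵥ y
        ∧ dvec ⬝ᵥ y ≤ (1 + β) * euclNorm (M⁻¹ *ᵥ y) ^ 2)
    -- (b) and (c)
    ∧ (∀ E : Matrix (Fin n) (Fin n) ℝ, E ≠ 0 →
        (frobNorm (E * (1 - (dvec ⬝ᵥ y)⁻¹ • vecMulVec (M⁻¹ *ᵥ y) (M⁻¹ *ᵥ y)))
          ≤ Real.sqrt (1 - α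
                * (euclNorm (E *ᵥ (M⁻¹ *ᵥ y)) / (frobNorm E * euclNorm (M⁻¹ *ᵥ y))) ^ 2)
              * frobNorm E)
        ∧ (frobNorm (E * P)
          ≤ (Real.sqrt (1 - α
                * (euclNorm (E *ᵥ (M⁻¹ *ᵥ y)) / (frobNorm E * euclNorm (M⁻¹ *ᵥ y))) ^ 2)
              + (1 - β)⁻¹ * (euclNorm (M *ᵥ dvec - M⁻¹ *ᵥ y) / euclNorm (M⁻¹ *ᵥ y)))
              * frobNorm E))
    -- (d)
    ∧ (∀ (s : Fin n → ℝ) (A : Matrix (Fin n) (Fin n) ℝ),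
        frobNorm ((dvec ⬝ᵥ y)⁻¹ • vecMulVec (s - A *ᵥ y) (M *ᵥ dvec))
          ≤ 2 * euclNorm (s - A *ᵥ y) / euclNorm (M⁻¹ *ᵥ y)) := by
  set z : Fin n → ℝ := M⁻¹ *ᵥ y with hz
  set w : Fin n → ℝ := M *ᵥ dvec with hw
  set c : ℝ := dvec ⬝ᵥ y with hc
  set Z : ℝ := euclNorm z with hZ
  -- basic facts
  have hMz : M *ᵥ z = y := by
    rw [hz, Matrix.mulVec_mulVec, Matrix.mul_nonsing_inv M hM_inv, Matrix.one_mulVec]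
  have hz0 : z ≠ 0 := fun h => hy (by rw [← hMz, h, Matrix.mulVec_zero])
  have hZpos : 0 < Z := by
    rw [hZ]
    unfold euclNorm
    apply Real.sqrt_pos.2
    obtain ⟨i, hi⟩ := Function.ne_iff.mp hz0
    exact Finset.sum_pos' (fun i _ => sq_nonneg _) ⟨i, Finset.mem_univ i, lt_of_le_of_ne (sq_nonneg _) (Ne.symm (pow_ne_zero 2 hi))⟩
  have hZne : Z ≠ 0 := ne_of_gt hZpos
  have hNpos : 0 < Z ^ 2 := pow_pos hZpos 2
  have hsym : ∀ i j, M j i = M i j := fun i j => congrFun (congrFun hM_symm i) j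
  have hvm : dvec ᵥ* M = M *ᵥ dvec := by
    ext j
    simp only [Matrix.vecMul, Matrix.mulVec, dotProduct]
    exact Finset.sum_congr rfl fun i _ => by rw [hsym j i]; ring
  have hcw : c = w ⬝ᵥ z := by
    rw [hc, ← hMz, Matrix.dotProduct_mulVec, hvm]
  have hzz : z ⬝ᵥ z = Z ^ 2 := by
    rw [hZ, sq_euclNorm]
    simp [dotProduct, sq]
  have hcsplit : c = Z ^ 2 + (w - z) ⬝ᵥ z := by
    rw [hcw, ← hzz]
    rw [sub_dotProduct]; ring
  have hrz : |(w - z) ⬝ᵥ z| ≤ β * Z ^ 2 := by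
    calc |(w - z) ⬝ᵥ z| ≤ euclNorm (w - z) * euclNorm z := abs_dot_le _ _
      _ ≤ (β * Z) * Z := by
          apply mul_le_mul_of_nonneg_right _ (euclNorm_nonneg _)
          exact hclose
      _ = β * Z ^ 2 := by ring
  obtain ⟨hrz1, hrz2⟩ := abs_le.mp hrz
  have ha1 : (1 - β) * Z ^ 2 ≤ c := by rw [hcsplit]; nlinarith
  have ha2 : c ≤ (1 + β) * Z ^ 2 := by rw [hcsplit]; nlinarith
  have hcpos : 0 < c := lt_of_lt_of_le (by nlinarith) ha1
  have hcne : c ≠ 0 := ne_of_gt hcpos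
  have h1β : (0:ℝ) < 1 - β := by linarith
  refine ⟨⟨ha1, ha2⟩, ?_, ?_⟩
  · -- (b) and (c)
    intro E hE
    have hF2pos : 0 < frobNorm E ^ 2 := by
      rw [sq_frobNorm]
      have : ∃ i j, E i j ≠ 0 := by
        by_contra h
        push_neg at h
        exact hE (by ext i j; simp [h])
      obtain ⟨i, j, hij⟩ := this
      refine Finset.sum_pos' (fun i _ => Finset.sum_nonneg fun j _ => sq_nonneg _)
        ⟨i, Finset.mem_univ i, Finset.sum_pos' (fun j _ => sq_nonneg _)
          ⟨j, Finset.mem_univ j, lt_of_le_of_ne (sq_nonneg _) (Ne.symm (pow_ne_zero 2 hij))⟩⟩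
    have hFpos : 0 < frobNorm E := by
      rcases (frobNorm_nonneg E).lt_or_eq with h | h
      · exact h
      · exfalso; rw [← h] at hF2pos; simp at hF2pos
    set Ez : Fin n → ℝ := E *ᵥ z with hEz
    set q : ℝ := euclNorm Ez ^ 2 with hq
    set F2 : ℝ := frobNorm E ^ 2 with hF2
    have hq0 : 0 ≤ q := by rw [hq]; positivity
    have hqle : q ≤ F2 * Z ^ 2 := by rw [hq, hF2]; exact sq_mulVec_le E z
    -- frobenius norm expansion
    have hBsq : frobNorm (E - c⁻¹ • vecMulVec Ez z) ^ 2
        = F2 - 2 * c⁻¹ * q + c⁻¹ ^ 2 * (q * Z ^ 2) := by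
      rw [sq_frobNorm]
      have hrow : ∀ i, ∑ j, ((E - c⁻¹ • vecMulVec Ez z) i j) ^ 2
          = (∑ j, E i j ^ 2) - 2 * c⁻¹ * (Ez i) ^ 2
            + c⁻¹ ^ 2 * ((Ez i) ^ 2 * ∑ j, z j ^ 2) := by
        intro i
        have hEzi : Ez i = ∑ j, E i j * z j := rfl
        calc ∑ j, ((E - c⁻¹ • vecMulVec Ez z) i j) ^ 2
            = ∑ j, (E i j ^ 2 - (2 * c⁻¹ * Ez i) * (E i j * z j)
                + c⁻¹ ^ 2 * ((Ez i) ^ 2 * z j ^ 2)) := by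
              refine Finset.sum_congr rfl fun j _ => ?_
              simp only [Matrix.sub_apply, Matrix.smul_apply, vecMulVec_apply, smul_eq_mul]
              ring
          _ = (∑ j, E i j ^ 2) - (2 * c⁻¹ * Ez i) * (∑ j, E i j * z j)
                + c⁻¹ ^ 2 * ((Ez i) ^ 2 * ∑ j, z j ^ 2) := by
              rw [Finset.sum_add_distrib, Finset.sum_sub_distrib, ← Finset.mul_sum,
                ← Finset.mul_sum, ← Finset.mul_sum]
          _ = _ := by rw [← hEzi]; ring
      calc ∑ i, ∑ j, ((E - c⁻¹ • vecMulVec Ez z) i j) ^ 2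
          = ∑ i, ((∑ j, E i j ^ 2) - 2 * c⁻¹ * (Ez i) ^ 2
              + c⁻¹ ^ 2 * ((Ez i) ^ 2 * ∑ j, z j ^ 2)) :=
            Finset.sum_congr rfl fun i _ => hrow i
        _ = (∑ i, ∑ j, E i j ^ 2) - 2 * c⁻¹ * (∑ i, (Ez i) ^ 2)
              + c⁻¹ ^ 2 * ((∑ i, (Ez i) ^ 2) * ∑ j, z j ^ 2) := by
            rw [Finset.sum_add_distrib, Finset.sum_sub_distrib, ← Finset.mul_sum,
              ← Finset.mul_sum, ← Finset.sum_mul]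
        _ = F2 - 2 * c⁻¹ * q + c⁻¹ ^ 2 * (q * Z ^ 2) := by
            rw [hF2, sq_frobNorm, hq, sq_euclNorm, hZ, sq_euclNorm]
    -- key inequality
    have hb2 : (0:ℝ) < 1 - β ^ 2 := by nlinarith
    have hαc : α * c ^ 2 ≤ (2 * c - Z ^ 2) * Z ^ 2 := by
      rw [hα, div_mul_eq_mul_div, div_le_iff₀ hb2]
      exact key_quad β c (Z ^ 2) hβ0 hβ3 hNpos ha1 ha2
    have hθsq : (euclNorm Ez / (frobNorm E * Z)) ^ 2 = q / (F2 * Z ^ 2) := by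
      rw [div_pow, mul_pow, hq, hF2]
    have e1 : α * (q / (F2 * Z ^ 2)) * F2 = α * q / Z ^ 2 := by
      field_simp
    have e3 : α * q / Z ^ 2 ≤ 2 * c⁻¹ * q - c⁻¹ ^ 2 * (q * Z ^ 2) := by
      have e2 : 2 * c⁻¹ * q - c⁻¹ ^ 2 * (q * Z ^ 2) = q * (2 * c - Z ^ 2) / c ^ 2 := by
        field_simp
      rw [e2, div_le_div_iff₀ hNpos (pow_pos hcpos 2)]
      nlinarith [mul_le_mul_of_nonneg_left hαc hq0]
    have hmain : frobNorm (E - c⁻¹ • vecMulVec Ez z) ^ 2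
        ≤ (1 - α * (euclNorm Ez / (frobNorm E * Z)) ^ 2) * F2 := by
      rw [hBsq, hθsq, sub_mul, one_mul, e1]
      linarith
    have hrhs0 : 0 ≤ 1 - α * (euclNorm Ez / (frobNorm E * Z)) ^ 2 := by
      have h0 : 0 ≤ (1 - α * (euclNorm Ez / (frobNorm E * Z)) ^ 2) * F2 :=
        le_trans (sq_nonneg _) hmain
      exact (mul_nonneg_iff_of_pos_right hF2pos).mp h0
    have hbfinal : frobNorm (E - c⁻¹ • vecMulVec Ez z)
        ≤ Real.sqrt (1 - α * (euclNorm Ez / (frobNorm E * Z)) ^ 2) * frobNorm E := by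
      rw [← Real.sqrt_sq (frobNorm_nonneg (E - c⁻¹ • vecMulVec Ez z))]
      refine le_trans (Real.sqrt_le_sqrt hmain) ?_
      rw [Real.sqrt_mul hrhs0, hF2, Real.sqrt_sq (frobNorm_nonneg E)]
    have hBform : E * (1 - c⁻¹ • vecMulVec z z) = E - c⁻¹ • vecMulVec Ez z := by
      rw [Matrix.mul_sub, Matrix.mul_one, Matrix.mul_smul, _root_.mul_vecMulVec, hEz]
    constructor
    · rw [hBform]; exact hbfinal
    · -- (c)
      have hEP : E * P = (E - c⁻¹ • vecMulVec Ez z) + (-c⁻¹) • vecMulVec Ez (w - z) := by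
        rw [hP, Matrix.mul_sub, Matrix.mul_one, Matrix.mul_smul, _root_.mul_vecMulVec, ← hEz]
        ext i j
        simp only [Matrix.add_apply, Matrix.sub_apply, Matrix.smul_apply, vecMulVec_apply,
          smul_eq_mul, Pi.sub_apply]
        ring
      rw [hEP]
      refine le_trans (frobNorm_triangle _ _) ?_
      rw [add_mul]
      refine add_le_add hbfinal ?_
      rw [frobNorm_smul, frobNorm_vecMulVec, abs_neg, abs_of_pos (inv_pos.2 hcpos)]
      have hEzZ : euclNorm Ez ≤ frobNorm E * Z := by
        rw [hEz, hZ]; exact euclNorm_mulVec_le E z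
      have hstep : c⁻¹ * (euclNorm Ez * euclNorm (w - z))
          ≤ ((1 - β) * Z ^ 2)⁻¹ * ((frobNorm E * Z) * euclNorm (w - z)) := by
        apply mul_le_mul
        · exact inv_anti₀ (by nlinarith) ha1
        · exact mul_le_mul_of_nonneg_right hEzZ (euclNorm_nonneg _)
        · exact mul_nonneg (euclNorm_nonneg _) (euclNorm_nonneg _)
        · exact inv_nonneg.2 (by nlinarith)
      have h1βne : (1:ℝ) - β ≠ 0 := ne_of_gt h1β
      refine le_trans hstep (le_of_eq ?_)
      field_simp
  · -- (d)
    intro s A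
    set u : Fin n → ℝ := s - A *ᵥ y with hu
    rw [frobNorm_smul, frobNorm_vecMulVec, abs_of_pos (inv_pos.2 hcpos)]
    have hwZ : euclNorm w ≤ (1 + β) * Z := by
      have hsplit : w = z + (w - z) := by abel
      calc euclNorm w = euclNorm (z + (w - z)) := by rw [← hsplit]
        _ ≤ euclNorm z + euclNorm (w - z) := euclNorm_triangle _ _
        _ ≤ Z + β * Z := by
            refine add_le_add (le_of_eq hZ.symm) ?_
            exact hclose
        _ = (1 + β) * Z := by ring
    have hstep : c⁻¹ * (euclNorm u * euclNorm w)
        ≤ ((1 - β) * Z ^ 2)⁻¹ * (euclNorm u * ((1 + β) * Z)) := by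
      apply mul_le_mul
      · exact inv_anti₀ (by nlinarith) ha1
      · exact mul_le_mul_of_nonneg_left hwZ (euclNorm_nonneg _)
      · exact mul_nonneg (euclNorm_nonneg _) (euclNorm_nonneg _)
      · exact inv_nonneg.2 (by nlinarith)
    refine le_trans hstep ?_
    rw [div_eq_mul_inv]
    have h1βne : (1:ℝ) - β ≠ 0 := ne_of_gt h1β
    have hid : ((1 - β) * Z ^ 2)⁻¹ * (euclNorm u * ((1 + β) * Z))
        = ((1 + β) / (1 - β)) * (euclNorm u * Z⁻¹) := by
      field_simp
    rw [hid]
    have h2 : (1 + β) / (1 - β) ≤ 2 := by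
      rw [div_le_iff₀ h1β]; linarith
    have : 2 * euclNorm u * Z⁻¹ = 2 * (euclNorm u * Z⁻¹) := by ring
    rw [this]
    exact mul_le_mul_of_nonneg_right h2 (mul_nonneg (euclNorm_nonneg _) (inv_nonneg.2 hZpos.le))
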